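/- Let n ≥ 1 be an integer and a > 0 a real number, and define Θ_a(ξ) = 2 e^{−2aξ} ξ^{1−n} ∫₀^ξ e^{2at} t^{n−1} dt for ξ > 0. Then the function ξ ↦ Θ_a(ξ) − 1/a is O(1/ξ) as ξ → +∞; that is, there exist constants C > 0 and R > 0 such that |Θ_a(ξ) − 1/a| ≤ C/ξ for all ξ ≥ R. -/

import Mathlib

open MeasureTheory intervalIntegral

/-- The profile function of Cao's steady gradient Kähler–Ricci soliton
on `ℂⁿ` in the Calabi ansatz. -/
noncomputable def caoProfile (n : ℕ) (a ξ : ℝ) : ℝ :=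
  2 * Real.exp (-(2 * a * ξ)) * ξ ^ ((1 : ℤ) - n) *
    ∫ t in (0 : ℝ)..ξ, Real.exp (2 * a * t) * t ^ (n - 1)

lemma cao_key (a : ℝ) (ha : 0 < a) (k : ℕ) (ξ : ℝ) :
    (∫ t in (0 : ℝ)..ξ, Real.exp (2 * a * t) * t ^ k)
      = Real.exp (2 * a * ξ) * ξ ^ k / (2 * a) - Real.exp 0 * (0 : ℝ) ^ k / (2 * a)
        - (k : ℝ) / (2 * a) * ∫ t in (0 : ℝ)..ξ, Real.exp (2 * a * t) * t ^ (k - 1) := by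
  have ha' : (2 * a) ≠ 0 := by positivity
  have hg : ∀ t : ℝ, HasDerivAt (fun s : ℝ => Real.exp (2 * a * s) * s ^ k / (2 * a))
      (Real.exp (2 * a * t) * t ^ k + (k : ℝ) / (2 * a) * (Real.exp (2 * a * t) * t ^ (k - 1)))
      t := by
    intro t
    have h1 : HasDerivAt (fun s : ℝ => Real.exp (2 * a * s))
        (Real.exp (2 * a * t) * (2 * a * 1)) t := ((hasDerivAt_id t).const_mul (2 * a)).exp
    have h2 : HasDerivAt (fun s : ℝ => s ^ k) ((k : ℝ) * t ^ (k - 1)) t := hasDerivAt_pow k t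
    have h := (h1.mul h2).div_const (2 * a)
    refine h.congr_deriv ?_
    field_simp
  have hc1 : Continuous fun t : ℝ => Real.exp (2 * a * t) * t ^ k := by fun_prop
  have hc2 : Continuous fun t : ℝ => Real.exp (2 * a * t) * t ^ (k - 1) := by fun_prop
  have hint : IntervalIntegrable
      (fun t : ℝ => Real.exp (2 * a * t) * t ^ k
        + (k : ℝ) / (2 * a) * (Real.exp (2 * a * t) * t ^ (k - 1)))
      volume 0 ξ := (hc1.add (continuous_const.mul hc2)).intervalIntegrable _ _
  have hFTC := intervalIntegral.integral_eq_sub_of_hasDerivAt (fun t _ => hg t) hint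
  rw [intervalIntegral.integral_add (hc1.intervalIntegrable _ _)
      (Continuous.intervalIntegrable (u := fun t : ℝ =>
        (k : ℝ) / (2 * a) * (Real.exp (2 * a * t) * t ^ (k - 1))) (continuous_const.mul hc2) _ _),
    intervalIntegral.integral_const_mul] at hFTC
  simp only [mul_zero, Real.exp_zero] at hFTC ⊢
  linarith [hFTC]

/-- The profile function of Cao's soliton satisfies
`Θ_a(ξ) = 1/a + O(ξ⁻¹)` as `ξ → ∞`. -/
theorem caoProfile_asymptotic (n : ℕ) (hn : 1 ≤ n) (a : ℝ) (ha : 0 < a) :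
    ∃ C > (0 : ℝ), ∃ R > (0 : ℝ), ∀ ξ ≥ R,
      |caoProfile n a ξ - 1 / a| ≤ C / ξ := by
  obtain ⟨m, rfl⟩ : ∃ m, n = m + 1 := ⟨n - 1, (Nat.succ_pred_eq_of_pos hn).symm⟩
  refine ⟨(m + 1) / (2 * a ^ 2), by positivity, 1, one_pos, fun ξ hξ => ?_⟩
  have hξ0 : (0 : ℝ) < ξ := lt_of_lt_of_le one_pos hξ
  have haξ : (0 : ℝ) < 2 * a * ξ := by positivity
  set E := Real.exp (2 * a * ξ) with hE
  have hE0 : 0 < E := Real.exp_pos _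
  have hEinv : E⁻¹ ≤ 1 / (2 * a * ξ) := by
    rw [inv_eq_one_div, div_le_div_iff₀ hE0 haξ, one_mul]
    linarith [Real.add_one_le_exp (2 * a * ξ)]
  set I₂ := ∫ t in (0 : ℝ)..ξ, Real.exp (2 * a * t) * t ^ (m - 1) with hI₂def
  -- bounds on I₂
  have hI₂nonneg : 0 ≤ I₂ := by
    apply intervalIntegral.integral_nonneg hξ0.le
    intro t ht
    exact mul_nonneg (Real.exp_pos _).le (pow_nonneg ht.1 _)
  have hI₂le : I₂ ≤ ξ ^ (m - 1) * E / (2 * a) := by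
    have hmono : I₂ ≤ ∫ t in (0 : ℝ)..ξ, Real.exp (2 * a * t) * ξ ^ (m - 1) := by
      apply intervalIntegral.integral_mono_on hξ0.le
      · exact ((by fun_prop : Continuous fun t : ℝ =>
          Real.exp (2 * a * t) * t ^ (m - 1)).intervalIntegrable _ _)
      · exact ((by fun_prop : Continuous fun t : ℝ =>
          Real.exp (2 * a * t) * ξ ^ (m - 1)).intervalIntegrable _ _)
      · intro t ht
        exact mul_le_mul_of_nonneg_left (pow_le_pow_left₀ ht.1 ht.2 _) (Real.exp_pos _).le
    have hexp : (∫ t in (0 : ℝ)..ξ, Real.exp (2 * a * t)) = E / (2 * a) - 1 / (2 * a) := by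
      have := cao_key a ha 0 ξ
      simpa using this
    calc I₂ ≤ ∫ t in (0 : ℝ)..ξ, Real.exp (2 * a * t) * ξ ^ (m - 1) := hmono
      _ = (∫ t in (0 : ℝ)..ξ, Real.exp (2 * a * t)) * ξ ^ (m - 1) := by
          rw [intervalIntegral.integral_mul_const]
      _ = (E / (2 * a) - 1 / (2 * a)) * ξ ^ (m - 1) := by rw [hexp]
      _ ≤ E / (2 * a) * ξ ^ (m - 1) := by
          apply mul_le_mul_of_nonneg_right _ (by positivity)
          have : 0 < 1 / (2 * a) := by positivity
          linarith
      _ = ξ ^ (m - 1) * E / (2 * a) := by ring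
  -- rewrite the profile
  have hzpow : ξ ^ ((1 : ℤ) - ((m + 1 : ℕ) : ℤ)) = (ξ ^ m)⁻¹ := by
    have h : (1 : ℤ) - ((m + 1 : ℕ) : ℤ) = -(m : ℤ) := by push_cast; ring
    rw [h, zpow_neg, zpow_natCast]
  have hkey := cao_key a ha m ξ
  have hΘ : caoProfile (m + 1) a ξ - 1 / a
      = -(E⁻¹ * (ξ ^ m)⁻¹ * (0 : ℝ) ^ m / a) - (m : ℝ) / a * (E⁻¹ * (ξ ^ m)⁻¹ * I₂) := by
    rw [caoProfile, hzpow]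
    simp only [Nat.add_sub_cancel, Real.exp_neg, ← hE, ← hI₂def]
    rw [hkey, ← hE, ← hI₂def, Real.exp_zero]
    have hξm : ξ ^ m ≠ 0 := by positivity
    field_simp
    ring
  rw [hΘ]
  have hx0 : 0 ≤ E⁻¹ * (ξ ^ m)⁻¹ * (0 : ℝ) ^ m / a := by positivity
  have hy0 : 0 ≤ (m : ℝ) / a * (E⁻¹ * (ξ ^ m)⁻¹ * I₂) := by positivity
  have habs : |(-(E⁻¹ * (ξ ^ m)⁻¹ * (0 : ℝ) ^ m / a)
      - (m : ℝ) / a * (E⁻¹ * (ξ ^ m)⁻¹ * I₂))|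
      = E⁻¹ * (ξ ^ m)⁻¹ * (0 : ℝ) ^ m / a + (m : ℝ) / a * (E⁻¹ * (ξ ^ m)⁻¹ * I₂) := by
    rw [show -(E⁻¹ * (ξ ^ m)⁻¹ * (0 : ℝ) ^ m / a) - (m : ℝ) / a * (E⁻¹ * (ξ ^ m)⁻¹ * I₂)
        = -((E⁻¹ * (ξ ^ m)⁻¹ * (0 : ℝ) ^ m / a) + (m : ℝ) / a * (E⁻¹ * (ξ ^ m)⁻¹ * I₂)) by ring,
      abs_neg, abs_of_nonneg (by linarith)]
  rw [habs]
  have hξm1 : (1 : ℝ) ≤ ξ ^ m := one_le_pow₀ hξ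
  have h0m : (0 : ℝ) ^ m ≤ 1 := by
    rcases Nat.eq_zero_or_pos m with h | h
    · simp [h]
    · rw [zero_pow (Nat.one_le_iff_ne_zero.mp h)]; norm_num
  have hterm1 : E⁻¹ * (ξ ^ m)⁻¹ * (0 : ℝ) ^ m / a ≤ 1 / (2 * a ^ 2) / ξ := by
    have h1 : E⁻¹ * (ξ ^ m)⁻¹ * (0 : ℝ) ^ m / a ≤ E⁻¹ * 1 * 1 / a := by
      gcongr
      · exact inv_le_one_of_one_le₀ hξm1
    have h2 : E⁻¹ * 1 * 1 / a ≤ 1 / (2 * a * ξ) / a :=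
      (div_le_div_iff_of_pos_right ha).mpr (by rw [mul_one, mul_one]; exact hEinv)
    calc E⁻¹ * (ξ ^ m)⁻¹ * (0 : ℝ) ^ m / a ≤ 1 / (2 * a * ξ) / a := le_trans h1 h2
      _ = 1 / (2 * a ^ 2) / ξ := by field_simp
  have hratio : (m : ℝ) * (ξ ^ (m - 1) * (ξ ^ m)⁻¹) ≤ (m : ℝ) / ξ := by
    rcases Nat.eq_zero_or_pos m with h | h
    · simp [h]
    · obtain ⟨k, rfl⟩ : ∃ k, m = k + 1 := ⟨m - 1, (Nat.succ_pred_eq_of_pos h).symm⟩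
      have hq : ξ ^ (k + 1 - 1) * (ξ ^ (k + 1))⁻¹ = 1 / ξ := by
        rw [Nat.add_sub_cancel, pow_succ]
        field_simp
      rw [hq, mul_one_div]
  have hterm2 : (m : ℝ) / a * (E⁻¹ * (ξ ^ m)⁻¹ * I₂) ≤ (m : ℝ) / (2 * a ^ 2) / ξ := by
    have h1 : (m : ℝ) / a * (E⁻¹ * (ξ ^ m)⁻¹ * I₂)
        ≤ (m : ℝ) / a * (E⁻¹ * (ξ ^ m)⁻¹ * (ξ ^ (m - 1) * E / (2 * a))) := by
      gcongr
    have h2 : (m : ℝ) / a * (E⁻¹ * (ξ ^ m)⁻¹ * (ξ ^ (m - 1) * E / (2 * a)))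
        = (m : ℝ) * (ξ ^ (m - 1) * (ξ ^ m)⁻¹) / (2 * a ^ 2) := by
      field_simp
    have h3 : (m : ℝ) * (ξ ^ (m - 1) * (ξ ^ m)⁻¹) / (2 * a ^ 2) ≤ ((m : ℝ) / ξ) / (2 * a ^ 2) := by
      gcongr
    have h4 : ((m : ℝ) / ξ) / (2 * a ^ 2) = (m : ℝ) / (2 * a ^ 2) / ξ := by ring
    linarith [h1, h2.le, h2.ge, h3, h4.le, h4.ge]
  have hsum : (1 : ℝ) / (2 * a ^ 2) / ξ + (m : ℝ) / (2 * a ^ 2) / ξ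
      = ((m : ℝ) + 1) / (2 * a ^ 2) / ξ := by ring
  push_cast
  linarith [hterm1, hterm2]
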